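/- Fix a constant L > 0, a finite nonempty index set N with |N| = m, and admissible functions h_i : ℝ → ℝ for i ∈ N. Let β be a real number with β ≤ 1/m and let γ be a natural number with γ ≤ m. Then the set X(β,γ) is convex and closed. -/

import Mathlib

open Set Filter Topology

/-- A function `h : ℝ → ℝ` is admissible with constant `L > 0` if it is convex,
continuously differentiable, its derivative is bounded by `L` and `L`-Lipschitz,
and its set of unconstrained global minimizers is nonempty and compact. -/
def Admissible (L : ℝ) (h : ℝ → ℝ) : Prop :=
  ConvexOn ℝ Set.univ h ∧ ContDiff ℝ 1 h ∧
    (∀ x : ℝ, |deriv h x| ≤ L) ∧ LipschitzWith L.toNNReal (deriv h) ∧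
    {x : ℝ | ∀ y : ℝ, h x ≤ h y}.Nonempty ∧ IsCompact {x : ℝ | ∀ y : ℝ, h x ≤ h y}

/-- A weight vector `α` over the index set `N` is `(β,γ)`-valid if all weights
are nonnegative, they sum to `1`, and at least `γ` indices in `N` have weight
at least `β`. -/
def ValidWeight {ι : Type*} (N : Finset ι) (β : ℝ) (γ : ℕ) (α : ι → ℝ) : Prop :=
  (∀ i ∈ N, 0 ≤ α i) ∧ (∑ i ∈ N, α i = 1) ∧
    ∃ S ⊆ N, γ ≤ S.card ∧ ∀ i ∈ S, β ≤ α i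

/-- `X(β,γ)`: the union over all `(β,γ)`-valid weight vectors `α` of the set of
unconstrained global minimizers of `x ↦ ∑_{i∈N} α_i h_i(x)`. -/
def XSet {ι : Type*} (N : Finset ι) (h : ι → ℝ → ℝ) (β : ℝ) (γ : ℕ) : Set ℝ :=
  {x : ℝ | ∃ α : ι → ℝ, ValidWeight N β γ α ∧
    ∀ y : ℝ, ∑ i ∈ N, α i * h i x ≤ ∑ i ∈ N, α i * h i y}

private lemma wsum_convexOn {ι : Type*} {N : Finset ι} {h : ι → ℝ → ℝ} {α : ι → ℝ}
    (hα : ∀ i ∈ N, 0 ≤ α i) (hc : ∀ i ∈ N, ConvexOn ℝ Set.univ (h i)) :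
    ConvexOn ℝ Set.univ (fun x => ∑ i ∈ N, α i * h i x) := by
  classical
  induction N using Finset.cons_induction with
  | empty => simpa using convexOn_const 0 convex_univ
  | cons i s hi ih =>
    simp only [Finset.sum_cons]
    exact ((hc i (Finset.mem_cons_self i s)).smul (hα i (Finset.mem_cons_self i s))).add
      (ih (fun j hj => hα j (Finset.mem_cons_of_mem hj))
        (fun j hj => hc j (Finset.mem_cons_of_mem hj)))

private lemma wsum_diff {ι : Type*} {N : Finset ι} {h : ι → ℝ → ℝ}
    (hd : ∀ i ∈ N, Differentiable ℝ (h i)) (α : ι → ℝ) :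
    Differentiable ℝ (fun x => ∑ i ∈ N, α i * h i x) :=
  Differentiable.fun_sum fun i hi => (hd i hi).const_mul _

private lemma wsum_deriv {ι : Type*} {N : Finset ι} {h : ι → ℝ → ℝ}
    (hd : ∀ i ∈ N, Differentiable ℝ (h i)) (α : ι → ℝ) (z : ℝ) :
    deriv (fun x => ∑ i ∈ N, α i * h i x) z = ∑ i ∈ N, α i * deriv (h i) z := by
  rw [deriv_fun_sum (fun i hi => ((hd i hi) z).const_mul _)]
  exact Finset.sum_congr rfl fun i hi => deriv_const_mul _ ((hd i hi) z)

private lemma isMin_of_deriv_zero {f : ℝ → ℝ} (hf : ConvexOn ℝ Set.univ f)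
    (hd : Differentiable ℝ f) {z : ℝ} (hz : deriv f z = 0) (y : ℝ) : f z ≤ f y := by
  rcases lt_trichotomy y z with hlt | heq | hgt
  · have h1 := hf.slope_le_deriv (Set.mem_univ y) (Set.mem_univ z) hlt (hd z)
    rw [hz, slope_def_field] at h1
    have hzy : (0:ℝ) < z - y := sub_pos.mpr hlt
    have := (div_le_iff₀ hzy).mp h1
    linarith
  · exact heq ▸ le_rfl
  · have h1 := hf.deriv_le_slope (Set.mem_univ z) (Set.mem_univ y) hgt (hd z)
    rw [hz, slope_def_field] at h1
    have hzy : (0:ℝ) < y - z := sub_pos.mpr hgt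
    have := (le_div_iff₀ hzy).mp h1
    linarith

private lemma deriv_nonneg_right {f : ℝ → ℝ} (hf : ConvexOn ℝ Set.univ f)
    (hd : Differentiable ℝ f) {x z : ℝ} (hxz : x ≤ z) (hmin : ∀ y, f x ≤ f y) :
    0 ≤ deriv f z := by
  rcases eq_or_lt_of_le hxz with rfl | hlt
  · have hloc : IsLocalMin f x := Filter.Eventually.of_forall hmin
    rw [hloc.deriv_eq_zero]
  · refine le_trans ?_ (hf.slope_le_deriv (Set.mem_univ x) (Set.mem_univ z) hlt (hd z))
    rw [slope_def_field]
    exact div_nonneg (sub_nonneg.mpr (hmin z)) (sub_nonneg.mpr hlt.le)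

private lemma deriv_nonpos_left {f : ℝ → ℝ} (hf : ConvexOn ℝ Set.univ f)
    (hd : Differentiable ℝ f) {z y : ℝ} (hzy : z ≤ y) (hmin : ∀ t, f y ≤ f t) :
    deriv f z ≤ 0 := by
  rcases eq_or_lt_of_le hzy with rfl | hlt
  · have hloc : IsLocalMin f z := Filter.Eventually.of_forall hmin
    rw [hloc.deriv_eq_zero]
  · refine le_trans (hf.deriv_le_slope (Set.mem_univ z) (Set.mem_univ y) hlt (hd z)) ?_
    rw [slope_def_field]
    exact div_nonpos_of_nonpos_of_nonneg (sub_nonpos.mpr (hmin z)) (sub_nonneg.mpr hlt.le)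

private lemma key_mem {ι : Type*} {N : Finset ι} {h : ι → ℝ → ℝ} {β : ℝ} {γ : ℕ}
    (hconv : ∀ i ∈ N, ConvexOn ℝ Set.univ (h i)) (hd : ∀ i ∈ N, Differentiable ℝ (h i))
    {w w' : ι → ℝ} (hw0 : ∀ i ∈ N, 0 ≤ w i) (hw'0 : ∀ i ∈ N, 0 ≤ w' i)
    (hw1 : ∑ i ∈ N, w i = 1) (hw'1 : ∑ i ∈ N, w' i = 1)
    {S : Finset ι} (hSN : S ⊆ N) (hScard : γ ≤ S.card)
    (hSw : ∀ i ∈ S, β ≤ w i) (hSw' : ∀ i ∈ S, β ≤ w' i)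
    {z : ℝ} (hA : 0 ≤ ∑ i ∈ N, w i * deriv (h i) z)
    (hB : ∑ i ∈ N, w' i * deriv (h i) z ≤ 0) :
    z ∈ XSet N h β γ := by
  set A := ∑ i ∈ N, w i * deriv (h i) z with hAdef
  set B := ∑ i ∈ N, w' i * deriv (h i) z with hBdef
  have hg : ContinuousOn (fun t : ℝ => t * A + (1 - t) * B) (Icc 0 1) := by fun_prop
  have hiv := intermediate_value_Icc (zero_le_one) hg
  have h0mem : (0:ℝ) ∈ Icc ((fun t : ℝ => t * A + (1 - t) * B) 0)
      ((fun t : ℝ => t * A + (1 - t) * B) 1) := by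
    simp only []
    constructor <;> simp <;> linarith
  obtain ⟨t, ht01, hgt⟩ := hiv h0mem
  obtain ⟨ht0, ht1⟩ := ht01
  have ht1' : 0 ≤ 1 - t := by linarith
  refine ⟨fun i => t * w i + (1 - t) * w' i, ⟨?_, ?_, S, hSN, hScard, ?_⟩, ?_⟩
  · intro i hi
    have := hw0 i hi; have := hw'0 i hi
    positivity
  · rw [Finset.sum_add_distrib, ← Finset.mul_sum, ← Finset.mul_sum, hw1, hw'1]; ring
  · intro i hiS
    calc β = t * β + (1 - t) * β := by ring
    _ ≤ t * w i + (1 - t) * w' i :=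
      add_le_add (mul_le_mul_of_nonneg_left (hSw i hiS) ht0)
        (mul_le_mul_of_nonneg_left (hSw' i hiS) ht1')
  · have hv0 : ∀ i ∈ N, 0 ≤ t * w i + (1 - t) * w' i := by
      intro i hi; have := hw0 i hi; have := hw'0 i hi; positivity
    refine isMin_of_deriv_zero (wsum_convexOn hv0 hconv) (wsum_diff hd _) ?_
    rw [wsum_deriv hd]
    have : ∑ i ∈ N, (t * w i + (1 - t) * w' i) * deriv (h i) z = t * A + (1 - t) * B := by
      rw [hAdef, hBdef, Finset.mul_sum, Finset.mul_sum, ← Finset.sum_add_distrib]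
      exact Finset.sum_congr rfl fun i hi => by ring
    rw [this]; simpa using hgt

/-- Lemma (convex B1): if `β ≤ 1/|N|` and `γ ≤ |N|`, the set `X(β,γ)` is
convex and closed. -/
theorem XSet_convex_isClosed {ι : Type*} (L : ℝ) (hL : 0 < L)
    (N : Finset ι) (hNne : N.Nonempty) (m : ℕ) (hm : N.card = m)
    (h : ι → ℝ → ℝ) (hadm : ∀ i ∈ N, Admissible L (h i))
    (β : ℝ) (hβ : β ≤ 1 / (m : ℝ)) (γ : ℕ) (hγ : γ ≤ m) :
    Convex ℝ (XSet N h β γ) ∧ IsClosed (XSet N h β γ) := by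
  classical
  have hmpos : 0 < m := hm ▸ Finset.card_pos.mpr hNne
  have hmR : (0:ℝ) < (m:ℝ) := by exact_mod_cast hmpos
  have hconv : ∀ i ∈ N, ConvexOn ℝ Set.univ (h i) := fun i hi => (hadm i hi).1
  have hd : ∀ i ∈ N, Differentiable ℝ (h i) := fun i hi =>
    (hadm i hi).2.1.differentiable one_ne_zero
  have hcont : ∀ i ∈ N, Continuous (h i) := fun i hi => (hd i hi).continuous
  -- the uniform weight
  set u : ι → ℝ := fun i => if i ∈ N then (m:ℝ)⁻¹ else 0 with hu
  have hu0 : ∀ i ∈ N, 0 ≤ u i := by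
    intro i hi; simp only [hu, if_pos hi]; positivity
  have hu1 : ∑ i ∈ N, u i = 1 := by
    have hcongr : ∀ i ∈ N, u i = (m:ℝ)⁻¹ := fun i hi => by simp only [hu, if_pos hi]
    rw [Finset.sum_congr rfl hcongr, Finset.sum_const, hm, nsmul_eq_mul]
    field_simp
  have huβ : ∀ i ∈ N, β ≤ u i := by
    intro i hi; simp only [hu, if_pos hi]
    calc β ≤ 1 / (m:ℝ) := hβ
    _ = (m:ℝ)⁻¹ := one_div _
  -- interval property
  have hbetween : ∀ x ∈ XSet N h β γ, ∀ y ∈ XSet N h β γ, Icc x y ⊆ XSet N h β γ := by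
    rintro x ⟨α, ⟨hα0, hα1, S, hSN, hScard, hSβ⟩, hαmin⟩
      y ⟨α', ⟨hα'0, hα'1, S', hS'N, hS'card, hS'β⟩, hα'min⟩ z ⟨hxz, hzy⟩
    have hA : 0 ≤ ∑ i ∈ N, α i * deriv (h i) z := by
      have := deriv_nonneg_right (wsum_convexOn hα0 hconv) (wsum_diff hd α) hxz hαmin
      rwa [wsum_deriv hd] at this
    have hB : ∑ i ∈ N, α' i * deriv (h i) z ≤ 0 := by
      have := deriv_nonpos_left (wsum_convexOn hα'0 hconv) (wsum_diff hd α') hzy hα'min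
      rwa [wsum_deriv hd] at this
    rcases le_or_gt (∑ i ∈ N, u i * deriv (h i) z) 0 with hC | hC
    · exact key_mem hconv hd hα0 hu0 hα1 hu1 hSN hScard hSβ
        (fun i hiS => huβ i (hSN hiS)) hA hC
    · exact key_mem hconv hd hu0 hα'0 hu1 hα'1 hS'N hS'card
        (fun i hiS => huβ i (hS'N hiS)) hS'β hC.le hB
  constructor
  · rw [convex_iff_ordConnected]
    exact ⟨fun x hx y hy => hbetween x hx y hy⟩
  · -- closedness
    apply IsSeqClosed.isClosed
    intro v x hv hvx
    choose α hval hmin using hv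
    have hS : ∀ n, ∃ S, S ∈ N.powerset ∧ γ ≤ S.card ∧ ∀ i ∈ S, β ≤ α n i := by
      intro n
      obtain ⟨S, hSN, h1, h2⟩ := (hval n).2.2
      exact ⟨S, Finset.mem_powerset.mpr hSN, h1, h2⟩
    choose S hSmem hScard hSβ using hS
    obtain ⟨T, hTinf⟩ := Finite.exists_infinite_fiber
      (fun n => (⟨S n, hSmem n⟩ : {T // T ∈ N.powerset}))
    have hTinf' : {n | (⟨S n, hSmem n⟩ : {T // T ∈ N.powerset}) = T}.Infinite := by
      rw [← Set.infinite_coe_iff]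
      exact hTinf
    obtain ⟨φ, hφ, hφT⟩ := Filter.extraction_of_frequently_atTop
      (Nat.frequently_atTop_iff_infinite.mpr hTinf')
    have hSφ : ∀ n, S (φ n) = T.1 := fun n => congrArg Subtype.val (hφT n)
    -- compactness of the cube
    have hK : IsCompact (Set.univ.pi fun _ : {i // i ∈ N} => Icc (0:ℝ) 1) :=
      isCompact_univ_pi fun _ => isCompact_Icc
    have hb : ∀ n, (fun i : {i // i ∈ N} => α (φ n) i.1) ∈
        Set.univ.pi fun _ : {i // i ∈ N} => Icc (0:ℝ) 1 := by
      intro n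
      rw [Set.mem_univ_pi]
      intro i
      refine ⟨(hval (φ n)).1 i.1 i.2, ?_⟩
      calc α (φ n) i.1 ≤ ∑ j ∈ N, α (φ n) j :=
        Finset.single_le_sum (fun j hj => (hval (φ n)).1 j hj) i.2
      _ = 1 := (hval (φ n)).2.1
    obtain ⟨c, hc, ψ, hψ, hcψ⟩ := hK.tendsto_subseq hb
    set σ : ℕ → ℕ := φ ∘ ψ with hσ
    have hσmono : StrictMono σ := hφ.comp hψ
    set w : ι → ℝ := fun i => if hi : i ∈ N then c ⟨i, hi⟩ else 0 with hw
    have hptwise : ∀ i ∈ N, Tendsto (fun n => α (σ n) i) atTop (𝓝 (w i)) := by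
      intro i hi
      have := tendsto_pi_nhds.mp hcψ ⟨i, hi⟩
      simpa [hw, hσ, dif_pos hi] using this
    refine ⟨w, ⟨?_, ?_, T.1, Finset.mem_powerset.mp T.2, ?_, ?_⟩, ?_⟩
    · intro i hi
      exact ge_of_tendsto' (hptwise i hi) (fun n => (hval (σ n)).1 i hi)
    · have h1 : Tendsto (fun n => ∑ i ∈ N, α (σ n) i) atTop (𝓝 (∑ i ∈ N, w i)) :=
        tendsto_finset_sum _ fun i hi => hptwise i hi
      have h2 : (fun n => ∑ i ∈ N, α (σ n) i) = fun _ => (1:ℝ) := by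
        funext n; exact (hval (σ n)).2.1
      rw [h2] at h1
      exact (tendsto_nhds_unique h1 tendsto_const_nhds).symm ▸ rfl
    · have := hScard (φ (ψ 0))
      rwa [hSφ (ψ 0)] at this
    · intro i hiT
      refine ge_of_tendsto' (hptwise i (Finset.mem_powerset.mp T.2 hiT)) (fun n => ?_)
      have : i ∈ S (σ n) := by rw [hσ]; simp only [Function.comp]; rw [hSφ (ψ n)]; exact hiT
      exact hSβ (σ n) i this
    · intro y
      have hvσ : Tendsto (fun n => v (σ n)) atTop (𝓝 x) := hvx.comp hσmono.tendsto_atTop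
      have hL : Tendsto (fun n => ∑ i ∈ N, α (σ n) i * h i (v (σ n))) atTop
          (𝓝 (∑ i ∈ N, w i * h i x)) :=
        tendsto_finset_sum _ fun i hi =>
          (hptwise i hi).mul (((hcont i hi).tendsto x).comp hvσ)
      have hR : Tendsto (fun n => ∑ i ∈ N, α (σ n) i * h i y) atTop
          (𝓝 (∑ i ∈ N, w i * h i y)) :=
        tendsto_finset_sum _ fun i hi => (hptwise i hi).mul tendsto_const_nhds
      exact le_of_tendsto_of_tendsto' hL hR (fun n => hmin (σ n) y)
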